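/- For all sufficiently large n, the number of 3-uniform hypergraphs with vertex set [n] = {1,…,n} in which every pair of distinct vertices is contained in at most one edge is at least 2^{n²/14}. -/

import Mathlib

open Filter

namespace PaperVC

open Finset

/-- If `e` has three elements summing to zero and contains distinct `x, y`, then
`e = {x, y, -(x+y)}`. -/
lemma tri {α : Type*} [AddCommGroup α] [DecidableEq α] {e : Finset α}
    (he : e.card = 3) (hs : e.sum id = 0) {x y : α} (hx : x ∈ e) (hy : y ∈ e)
    (hxy : x ≠ y) : e = {x, y, -(x + y)} := by
  have hy' : y ∈ e.erase x := mem_erase.2 ⟨hxy.symm, hy⟩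
  have h1 : ((e.erase x).erase y).card = 1 := by
    rw [card_erase_of_mem hy', card_erase_of_mem hx, he]
  obtain ⟨z, hz⟩ := card_eq_one.1 h1
  have hzmem : z ∈ (e.erase x).erase y := hz ▸ mem_singleton_self z
  have hzy : z ≠ y := (mem_erase.1 hzmem).1
  have hzx : z ≠ x := (mem_erase.1 (mem_erase.1 hzmem).2).1
  have he2 : e = {x, y, z} := by
    have h2 : insert y ((e.erase x).erase y) = e.erase x := insert_erase hy'
    have h3 : insert x (e.erase x) = e := insert_erase hx
    rw [← h3, ← h2, hz]
  have hsum : x + y + z = 0 := by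
    rw [he2] at hs
    rw [sum_insert (by simp [hxy, hzx.symm]), sum_insert (by simp [hzy.symm]),
      sum_singleton] at hs
    simpa [add_assoc] using hs
  have hzval : z = -(x + y) := eq_neg_of_add_eq_zero_left (by rw [add_comm]; exact hsum)
  rw [he2, hzval]

/-- **From Example 4.3.**  For all sufficiently large `n`, the number of `3`-uniform
hypergraphs on vertex set `[n]` in which every pair of distinct vertices lies in at most one
edge is at least `2^(n²/14)`. -/
theorem statement15 :
    ∀ᶠ n : ℕ in atTop,
      (2 : ℝ) ^ ((n : ℝ) ^ 2 / 14) ≤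
        (Nat.card { E : Finset (Finset (Fin n)) //
          (∀ e ∈ E, e.card = 3) ∧
          ∀ x y : Fin n, x ≠ y → (E.filter fun e => x ∈ e ∧ y ∈ e).card ≤ 1 } : ℝ) := by
  filter_upwards [eventually_ge_atTop 9] with n hn
  obtain ⟨m, rfl⟩ : ∃ m, n = m + 1 := ⟨n - 1, by omega⟩
  set N : ℕ := m + 1 with hN
  -- the fixed linear triple system
  set F : Finset (Finset (Fin N)) :=
    univ.filter (fun e => e.card = 3 ∧ e.sum id = 0) with hFdef
  have hFmem : ∀ e ∈ F, e.card = 3 ∧ e.sum id = 0 := by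
    intro e he; simpa [hFdef] using he
  -- every subset of F satisfies the hypergraph property
  have hprop : ∀ S : Finset (Finset (Fin N)), S ⊆ F →
      (∀ e ∈ S, e.card = 3) ∧
      ∀ x y : Fin N, x ≠ y → (S.filter fun e => x ∈ e ∧ y ∈ e).card ≤ 1 := by
    intro S hS
    refine ⟨fun e he => (hFmem e (hS he)).1, fun x y hxy => ?_⟩
    apply card_le_one.2
    intro e1 h1 e2 h2
    simp only [mem_filter] at h1 h2
    obtain ⟨hc1, hs1⟩ := hFmem e1 (hS h1.1)
    obtain ⟨hc2, hs2⟩ := hFmem e2 (hS h2.1)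
    rw [tri hc1 hs1 h1.2.1 h1.2.2 hxy, tri hc2 hs2 h2.2.1 h2.2.2 hxy]
  -- lower bound on the number of edges of F
  set g : Fin N × Fin N → Finset (Fin N) := fun p => {p.1, p.2, -(p.1 + p.2)} with hg
  set S : Finset (Fin N × Fin N) :=
    univ.filter (fun p => p.1 ≠ p.2 ∧ p.1 ≠ -(p.1 + p.2) ∧ p.2 ≠ -(p.1 + p.2)) with hSdef
  have hgF : ∀ p ∈ S, g p ∈ F := by
    intro p hp
    simp only [hSdef, mem_filter, mem_univ, true_and] at hp
    obtain ⟨h1, h2, h3⟩ := hp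
    simp only [hFdef, mem_filter, mem_univ, true_and, hg]
    have hm1 : p.1 ∉ ({p.2, -(p.1 + p.2)} : Finset (Fin N)) := by
      simp only [mem_insert, mem_singleton]; exact not_or.2 ⟨h1, h2⟩
    have hm2 : p.2 ∉ ({-(p.1 + p.2)} : Finset (Fin N)) := by
      simp only [mem_singleton]; exact h3
    constructor
    · rw [card_insert_of_notMem hm1, card_insert_of_notMem hm2, card_singleton]
    · rw [sum_insert hm1, sum_insert hm2, sum_singleton]
      simp [add_assoc]
  -- each edge has at most 9 preimages
  have hfiber : S.card ≤ 9 * (S.image g).card := by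
    apply card_le_mul_card_image
    intro b hb
    obtain ⟨p, hp, hpb⟩ := mem_image.1 hb
    have hbF : b ∈ F := hpb ▸ hgF p hp
    have hb3 : b.card = 3 := (hFmem b hbF).1
    have hsub : (S.filter fun a => g a = b) ⊆ b ×ˢ b := by
      intro q hq
      simp only [mem_filter] at hq
      have h1 : q.1 ∈ g q := by simp [hg]
      have h2 : q.2 ∈ g q := by simp [hg]
      rw [hq.2] at h1 h2
      exact mem_product.2 ⟨h1, h2⟩
    calc (S.filter fun a => g a = b).card ≤ (b ×ˢ b).card := card_le_card hsub
      _ = 9 := by rw [card_product, hb3]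
  have himg : (S.image g).card ≤ F.card := card_le_card (by
    intro b hb
    obtain ⟨p, hp, hpb⟩ := mem_image.1 hb
    exact hpb ▸ hgF p hp)
  -- lower bound on S.card
  have hScompl : N * N ≤ S.card + 3 * N := by
    have hsplit := card_filter_add_card_filter_not (s := (univ : Finset (Fin N × Fin N)))
      (p := fun p => p.1 ≠ p.2 ∧ p.1 ≠ -(p.1 + p.2) ∧ p.2 ≠ -(p.1 + p.2))
    rw [← hSdef] at hsplit
    have hcardu : (univ : Finset (Fin N × Fin N)).card = N * N := by
      simp [card_univ]
    have hT : (univ.filter (fun p : Fin N × Fin N =>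
        ¬(p.1 ≠ p.2 ∧ p.1 ≠ -(p.1 + p.2) ∧ p.2 ≠ -(p.1 + p.2)))).card ≤ 3 * N := by
      have hsub : (univ.filter (fun p : Fin N × Fin N =>
          ¬(p.1 ≠ p.2 ∧ p.1 ≠ -(p.1 + p.2) ∧ p.2 ≠ -(p.1 + p.2)))) ⊆
          (univ.filter (fun p : Fin N × Fin N => p.2 = p.1)) ∪
          ((univ.filter (fun p : Fin N × Fin N => p.2 = -(p.1 + p.1))) ∪
           (univ.filter (fun p : Fin N × Fin N => p.1 = -(p.2 + p.2)))) := by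
        intro p hp
        simp only [mem_filter, mem_univ, true_and, not_and_or, not_ne_iff] at hp
        simp only [mem_union, mem_filter, mem_univ, true_and]
        rcases hp with h | h | h
        · exact Or.inl h.symm
        · refine Or.inr (Or.inl ?_)
          open Fin.CommRing in linear_combination h
        · refine Or.inr (Or.inr ?_)
          open Fin.CommRing in linear_combination h
      have hone : ∀ f : Fin N → Fin N,
          (univ.filter (fun p : Fin N × Fin N => p.2 = f p.1)).card ≤ N := by
        intro f
        have : (univ.filter (fun p : Fin N × Fin N => p.2 = f p.1)).card ≤
            (univ : Finset (Fin N)).card := by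
          apply card_le_card_of_injOn Prod.fst (fun _ _ => mem_univ _)
          intro p hp q hq hpq
          simp only [coe_filter, Set.mem_setOf_eq] at hp hq
          exact Prod.ext hpq (by rw [hp.2, hq.2, hpq])
        simpa using this
      have hone' : (univ.filter (fun p : Fin N × Fin N => p.1 = -(p.2 + p.2))).card ≤ N := by
        have : (univ.filter (fun p : Fin N × Fin N => p.1 = -(p.2 + p.2))).card ≤
            (univ : Finset (Fin N)).card := by
          apply card_le_card_of_injOn Prod.snd (fun _ _ => mem_univ _)
          intro p hp q hq hpq
          simp only [coe_filter, Set.mem_setOf_eq] at hp hq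
          exact Prod.ext (by rw [hp.2, hq.2, hpq]) hpq
        simpa using this
      calc _ ≤ _ := card_le_card hsub
        _ ≤ _ := card_union_le _ _
        _ ≤ N + ((univ.filter (fun p : Fin N × Fin N => p.2 = -(p.1 + p.1))).card +
            (univ.filter (fun p : Fin N × Fin N => p.1 = -(p.2 + p.2))).card) := by
            gcongr
            · exact hone (fun x => x)
            · exact card_union_le _ _
        _ ≤ N + (N + N) := add_le_add_right (add_le_add (hone (fun x => -(x + x))) hone') N
        _ = 3 * N := by ring
    omega
  -- combine: N² ≤ 14 * F.card
  have hmain : N * N ≤ 14 * F.card := by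
    have h1 : S.card ≤ 9 * F.card := hfiber.trans (by omega)
    nlinarith [hn, hScompl, h1]
  -- counting subsets of F
  have hcount : 2 ^ F.card ≤ Nat.card { E : Finset (Finset (Fin N)) //
      (∀ e ∈ E, e.card = 3) ∧
      ∀ x y : Fin N, x ≠ y → (E.filter fun e => x ∈ e ∧ y ∈ e).card ≤ 1 } := by
    have hinj : Function.Injective
        (fun T : {T // T ∈ F.powerset} =>
          (⟨T.1, hprop T.1 (mem_powerset.1 T.2)⟩ : { E : Finset (Finset (Fin N)) //
            (∀ e ∈ E, e.card = 3) ∧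
            ∀ x y : Fin N, x ≠ y → (E.filter fun e => x ∈ e ∧ y ∈ e).card ≤ 1 })) := by
      intro a b hab
      have h := congrArg Subtype.val hab
      exact Subtype.ext h
    calc 2 ^ F.card = F.powerset.card := (card_powerset F).symm
      _ = Nat.card {T // T ∈ F.powerset} := by
          rw [Nat.card_eq_fintype_card, Fintype.card_coe]
      _ ≤ _ := Nat.card_le_card_of_injective _ hinj
  -- final real chain
  have hexp : ((N : ℝ)) ^ 2 / 14 ≤ (F.card : ℝ) := by
    have h : ((N : ℝ)) * N ≤ 14 * (F.card : ℝ) := by exact_mod_cast hmain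
    rw [div_le_iff₀ (by norm_num)]
    nlinarith [h]
  calc (2 : ℝ) ^ (((N : ℕ) : ℝ) ^ 2 / 14) ≤ (2 : ℝ) ^ ((F.card : ℕ) : ℝ) := by
        apply Real.rpow_le_rpow_left_iff (by norm_num : (1:ℝ) < 2) |>.2 hexp
    _ = ((2 ^ F.card : ℕ) : ℝ) := by
        rw [Real.rpow_natCast]; push_cast; ring
    _ ≤ _ := by exact_mod_cast hcount

end PaperVC
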